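/- Let K₁, …, Kₙ ⊆ X be non-empty closed convex sets in a finite-dimensional real vector space X, let γ₁, …, γₙ be gauges on X, and let F be the set of minimizers of f : X → ℝ, f(x) = Σᵢ₌₁ⁿ dist_{γᵢ}(x, Kᵢ). Then: (a) F is closed and convex; (b) if at least one of the sets Kᵢ is bounded, then F is non-empty and bounded; (c) if all the sets Kᵢ are affine flats (affine subspaces of X), then F is non-empty and F = C + V is the Minkowski sum of a non-empty closed, bounded, convex set C and a linear subspace V of X (possibly V = {0}). -/

import Mathlib

open scoped Pointwise

/-- A gauge on a real vector space: nonnegative, definite at `0`, positively homogeneous,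
and subadditive. -/
def IsGauge {X : Type*} [AddCommGroup X] [Module ℝ X] (γ : X → ℝ) : Prop :=
  (∀ x, 0 ≤ γ x) ∧ (∀ x : X, γ x = 0 → x = 0) ∧
    (∀ (l : ℝ) (x : X), 0 ≤ l → γ (l • x) = l * γ x) ∧
    ∀ x y, γ (x + y) ≤ γ x + γ y

/-- The distance from `x` to the set `K` with respect to the gauge `γ`:
`dist_γ(x, K) = inf {γ (y - x) : y ∈ K}`. -/
noncomputable def gaugeDist {X : Type*} [AddCommGroup X] [Module ℝ X]
    (γ : X → ℝ) (x : X) (K : Set X) : ℝ :=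
  sInf ((fun y => γ (y - x)) '' K)

open Metric Filter Set

section Aux

variable {X : Type*} [NormedAddCommGroup X] [NormedSpace ℝ X]

namespace IsGauge

variable {γ : X → ℝ}

lemma nonneg (h : IsGauge γ) (x : X) : 0 ≤ γ x := h.1 x

lemma smul' (h : IsGauge γ) {l : ℝ} (hl : 0 ≤ l) (x : X) : γ (l • x) = l * γ x :=
  h.2.2.1 l x hl

lemma add_le (h : IsGauge γ) (x y : X) : γ (x + y) ≤ γ x + γ y := h.2.2.2 x y

lemma zero (h : IsGauge γ) : γ 0 = 0 := by
  have := h.smul' le_rfl (0 : X); simpa using this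

lemma pos (h : IsGauge γ) {x : X} (hx : x ≠ 0) : 0 < γ x :=
  (h.nonneg x).lt_of_ne fun e => hx (h.2.1 x e.symm)

lemma convexOn (h : IsGauge γ) : ConvexOn ℝ Set.univ γ := by
  refine ⟨convex_univ, fun x _ y _ a b ha hb hab => ?_⟩
  calc γ (a • x + b • y) ≤ γ (a • x) + γ (b • y) := h.add_le _ _
    _ = a * γ x + b * γ y := by rw [h.smul' ha, h.smul' hb]

lemma continuous [FiniteDimensional ℝ X] (h : IsGauge γ) : Continuous γ := by
  have := h.convexOn.continuousOn isOpen_univ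
  rwa [continuousOn_univ] at this

lemma exists_norm_le [FiniteDimensional ℝ X] (h : IsGauge γ) :
    ∃ m > 0, ∀ x, m * ‖x‖ ≤ γ x := by
  rcases subsingleton_or_nontrivial X with hX | hX
  · refine ⟨1, one_pos, fun x => ?_⟩
    have : x = 0 := Subsingleton.elim x 0
    simp [this, h.zero]
  · have hsp : (sphere (0 : X) 1).Nonempty := NormedSpace.sphere_nonempty.2 zero_le_one
    obtain ⟨u, hu, hmin⟩ :=
      (isCompact_sphere (0 : X) 1).exists_isMinOn hsp h.continuous.continuousOn
    have hu1 : ‖u‖ = 1 := by simpa using hu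
    have hune : u ≠ 0 := by intro e; rw [e] at hu1; simp at hu1
    refine ⟨γ u, h.pos hune, fun x => ?_⟩
    rcases eq_or_ne x 0 with rfl | hx
    · simp [h.zero]
    · have hnx : (0 : ℝ) < ‖x‖ := norm_pos_iff.2 hx
      have hmem : ‖x‖⁻¹ • x ∈ sphere (0 : X) 1 := by
        simp [norm_smul, abs_of_nonneg (inv_nonneg.2 hnx.le), inv_mul_cancel₀ hnx.ne']
      have h1 : γ u ≤ γ (‖x‖⁻¹ • x) := hmin hmem
      rw [h.smul' (inv_nonneg.2 hnx.le)] at h1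
      have h2 := mul_le_mul_of_nonneg_right h1 hnx.le
      calc γ u * ‖x‖ ≤ ‖x‖⁻¹ * γ x * ‖x‖ := h2
        _ = γ x := by field_simp

end IsGauge

section GaugeDist

variable {γ : X → ℝ} {K : Set X}

lemma gaugeDist_bddBelow (hγ : IsGauge γ) (x : X) :
    BddBelow ((fun y => γ (y - x)) '' K) := by
  refine ⟨0, ?_⟩
  rintro r ⟨y, _, rfl⟩
  exact hγ.nonneg _

lemma gaugeDist_nonneg (hγ : IsGauge γ) (hK : K.Nonempty) (x : X) :
    0 ≤ gaugeDist γ x K := by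
  refine le_csInf (hK.image _) ?_
  rintro r ⟨y, _, rfl⟩
  exact hγ.nonneg _

lemma gaugeDist_le (hγ : IsGauge γ) (x : X) {y : X} (hy : y ∈ K) :
    gaugeDist γ x K ≤ γ (y - x) :=
  csInf_le (gaugeDist_bddBelow hγ x) ⟨y, hy, rfl⟩

lemma gaugeDist_convexOn (hγ : IsGauge γ) (hK : K.Nonempty) (hcv : Convex ℝ K) :
    ConvexOn ℝ Set.univ fun x => gaugeDist γ x K := by
  refine ⟨convex_univ, fun x _ y _ a b ha hb hab => ?_⟩
  have key : ∀ ε > (0 : ℝ),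
      gaugeDist γ (a • x + b • y) K ≤ a • gaugeDist γ x K + b • gaugeDist γ y K + ε := by
    intro ε hε
    obtain ⟨p', ⟨p, hp, rfl⟩, hpe⟩ :=
      Real.lt_sInf_add_pos (s := (fun y' => γ (y' - x)) '' K) (hK.image _) (half_pos hε)
    obtain ⟨q', ⟨q, hq, rfl⟩, hqe⟩ :=
      Real.lt_sInf_add_pos (s := (fun y' => γ (y' - y)) '' K) (hK.image _) (half_pos hε)
    have hmem : a • p + b • q ∈ K := hcv hp hq ha hb hab
    have hle : gaugeDist γ (a • x + b • y) K ≤ γ ((a • p + b • q) - (a • x + b • y)) :=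
      gaugeDist_le hγ _ hmem
    have heq : (a • p + b • q) - (a • x + b • y) = a • (p - x) + b • (q - y) := by module
    rw [heq] at hle
    have h2 : γ (a • (p - x) + b • (q - y)) ≤ a * γ (p - x) + b * γ (q - y) := by
      calc γ (a • (p - x) + b • (q - y)) ≤ γ (a • (p - x)) + γ (b • (q - y)) := hγ.add_le _ _
        _ = a * γ (p - x) + b * γ (q - y) := by rw [hγ.smul' ha, hγ.smul' hb]
    have hpe' : γ (p - x) < gaugeDist γ x K + ε / 2 := hpe
    have hqe' : γ (q - y) < gaugeDist γ y K + ε / 2 := hqe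
    have h3 := mul_le_mul_of_nonneg_left hpe'.le ha
    have h4 := mul_le_mul_of_nonneg_left hqe'.le hb
    simp only [smul_eq_mul]
    nlinarith [hγ.nonneg (p - x), hγ.nonneg (q - y)]
  refine le_of_forall_sub_le fun ε hε => ?_
  linarith [key ε hε]

lemma gaugeDist_continuous [FiniteDimensional ℝ X] (hγ : IsGauge γ) (hK : K.Nonempty)
    (hcv : Convex ℝ K) : Continuous fun x => gaugeDist γ x K := by
  have := (gaugeDist_convexOn hγ hK hcv).continuousOn isOpen_univ
  rwa [continuousOn_univ] at this

lemma le_gaugeDist (hγ : IsGauge γ) (hK : K.Nonempty) {m : ℝ} (hm : 0 ≤ m)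
    (hmle : ∀ u, m * ‖u‖ ≤ γ u) (x : X) :
    m * infDist x K ≤ gaugeDist γ x K := by
  refine le_csInf (hK.image _) ?_
  rintro r ⟨y, hy, rfl⟩
  calc m * infDist x K ≤ m * dist x y :=
        mul_le_mul_of_nonneg_left (infDist_le_dist_of_mem hy) hm
    _ = m * ‖y - x‖ := by rw [dist_eq_norm, norm_sub_rev]
    _ ≤ γ (y - x) := hmle _

lemma gaugeDist_add_of_mem_direction (hγ : IsGauge γ) {S : AffineSubspace ℝ X}
    (hS : (S : Set X).Nonempty) {v : X} (hv : v ∈ S.direction) (x : X) :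
    gaugeDist γ (x + v) (S : Set X) = gaugeDist γ x (S : Set X) := by
  have key : ∀ w ∈ S.direction, ∀ z : X,
      gaugeDist γ (z + w) (S : Set X) ≤ gaugeDist γ z (S : Set X) := by
    intro w hw z
    refine le_csInf (hS.image _) ?_
    rintro r ⟨y, hy, rfl⟩
    have hyw : w + y ∈ S := by
      have := AffineSubspace.vadd_mem_of_mem_direction hw hy
      simpa [vadd_eq_add] using this
    have hyw' : w + y ∈ (S : Set X) := hyw
    have h1 := gaugeDist_le hγ (z + w) hyw'
    have h2 : (w + y) - (z + w) = y - z := by abel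
    rwa [h2] at h1
  refine le_antisymm (key v hv x) ?_
  have h3 := key (-v) (S.direction.neg_mem hv) (x + v)
  simpa using h3

end GaugeDist

section InfDistSmul

lemma infDist_smul_le_submodule (V : Submodule ℝ X) {r : ℝ} (hr : 0 < r) (x : X) :
    infDist (r • x) (V : Set X) ≤ r * infDist x (V : Set X) := by
  have hne : (V : Set X).Nonempty := ⟨0, V.zero_mem⟩
  refine le_of_forall_sub_le fun ε hε => ?_
  have hlt : infDist x (V : Set X) < infDist x (V : Set X) + ε / r :=
    lt_add_of_pos_right _ (div_pos hε hr)
  obtain ⟨v, hv, hdv⟩ := (infDist_lt_iff hne).1 hlt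
  have h1 : infDist (r • x) (V : Set X) ≤ dist (r • x) (r • v) :=
    infDist_le_dist_of_mem (V.smul_mem r hv)
  rw [dist_smul₀, Real.norm_eq_abs, abs_of_pos hr] at h1
  have h2 := mul_le_mul_of_nonneg_left hdv.le hr.le
  have h5 : r * (infDist x (V : Set X) + ε / r) = r * infDist x (V : Set X) + ε := by
    field_simp
  linarith [h1, h2, h5, mul_comm (infDist x (V : Set X)) r]

lemma infDist_smul_submodule (V : Submodule ℝ X) {r : ℝ} (hr : 0 ≤ r) (x : X) :
    infDist (r • x) (V : Set X) = r * infDist x (V : Set X) := by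
  rcases hr.eq_or_lt with rfl | hr
  · simp [infDist_zero_of_mem V.zero_mem]
  · refine le_antisymm (infDist_smul_le_submodule V hr x) ?_
    have h1 := infDist_smul_le_submodule V (inv_pos.2 hr) (r • x)
    rw [inv_smul_smul₀ hr.ne'] at h1
    have h2 := mul_le_mul_of_nonneg_left h1 hr.le
    rw [← mul_assoc, mul_inv_cancel₀ hr.ne', one_mul] at h2
    exact h2

lemma le_infDist_of {s : Set X} (hs : s.Nonempty) {b : ℝ} {x : X}
    (h : ∀ y ∈ s, b ≤ dist x y) : b ≤ infDist x s := by
  by_contra hb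
  push_neg at hb
  obtain ⟨y, hy, hd⟩ := (infDist_lt_iff hs).1 hb
  exact absurd hd (not_lt.2 (h y hy))

end InfDistSmul

section Coercive

variable [FiniteDimensional ℝ X]

/-- On a complement of the common directions, the weighted sum of distances to the
subspaces dominates a multiple of the norm. -/
lemma exists_coercive {n : ℕ} (V : Fin n → Submodule ℝ X) (m : Fin n → ℝ)
    (hm : ∀ i, 0 < m i) (W : Submodule ℝ X)
    (hVW : ∀ w : X, w ∈ W → (∀ i, w ∈ V i) → w = 0) :
    ∃ c > 0, ∀ w ∈ W, c * ‖w‖ ≤ ∑ i, m i * infDist w ((V i : Set X)) := by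
  have hsumnn : ∀ x : X, (0:ℝ) ≤ ∑ i, m i * infDist x ((V i : Set X)) := fun x =>
    Finset.sum_nonneg fun i _ => mul_nonneg (hm i).le infDist_nonneg
  rcases subsingleton_or_nontrivial ↥W with hWs | hWs
  · refine ⟨1, one_pos, fun w hw => ?_⟩
    have he : (⟨w, hw⟩ : ↥W) = 0 := Subsingleton.elim _ _
    have hw0 : w = 0 := congrArg Subtype.val he
    simpa [hw0] using hsumnn (0 : X)
  · set h : ↥W → ℝ := fun w => ∑ i, m i * infDist (w : X) ((V i : Set X)) with hh
    have hcont : Continuous h := by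
      refine continuous_finset_sum _ fun i _ => ?_
      exact continuous_const.mul ((continuous_infDist_pt _).comp continuous_subtype_val)
    have hsp : (sphere (0 : ↥W) 1).Nonempty := NormedSpace.sphere_nonempty.2 zero_le_one
    obtain ⟨u, hu, hmin⟩ :=
      (isCompact_sphere (0 : ↥W) 1).exists_isMinOn hsp hcont.continuousOn
    have hu1 : ‖u‖ = 1 := by simpa using hu
    have hcpos : 0 < h u := by
      rcases (hsumnn (u : X)).eq_or_lt with he | hl
      · exfalso
        have he' := he.symm
        have hz : ∀ i ∈ Finset.univ, m i * infDist (u : X) ((V i : Set X)) = 0 := by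
          rwa [Finset.sum_eq_zero_iff_of_nonneg
            (fun i _ => mul_nonneg (hm i).le infDist_nonneg)] at he'
        have hmem : ∀ i, (u : X) ∈ V i := by
          intro i
          have h0 : infDist (u : X) ((V i : Set X)) = 0 := by
            have := hz i (Finset.mem_univ i)
            exact (mul_eq_zero.1 this).resolve_left (hm i).ne'
          have hcl : IsClosed ((V i : Set X)) := (V i).closed_of_finiteDimensional
          exact (hcl.mem_iff_infDist_zero ⟨0, (V i).zero_mem⟩).2 h0
        have hu0 : (u : X) = 0 := hVW _ u.2 hmem
        have : u = 0 := Subtype.ext hu0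
        rw [this] at hu1; simp at hu1
      · exact hl
    refine ⟨h u, hcpos, fun w hw => ?_⟩
    rcases eq_or_ne w 0 with rfl | hwne
    · simpa using hsumnn (0 : X)
    · set ww : ↥W := ⟨w, hw⟩ with hww
      have hwwne : ww ≠ 0 := fun e => hwne (congrArg Subtype.val e)
      have hnw : (0 : ℝ) < ‖ww‖ := norm_pos_iff.2 hwwne
      have hnww : ‖ww‖ = ‖w‖ := rfl
      have hnw' : (0 : ℝ) < ‖w‖ := hnww ▸ hnw
      have hmem : ‖ww‖⁻¹ • ww ∈ sphere (0 : ↥W) 1 := by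
        simp [norm_smul, abs_of_nonneg (inv_nonneg.2 hnw.le), hnww,
          inv_mul_cancel₀ hnw'.ne']
      have h1 : h u ≤ h (‖ww‖⁻¹ • ww) := hmin hmem
      have h2 : h ww = ‖ww‖ * h (‖ww‖⁻¹ • ww) := by
        rw [hh]
        simp only [Finset.mul_sum]
        refine Finset.sum_congr rfl fun i _ => ?_
        have hcoe : ((‖ww‖⁻¹ • ww : ↥W) : X) = ‖ww‖⁻¹ • (ww : X) := rfl
        rw [hcoe, infDist_smul_submodule (V i) (inv_nonneg.2 hnw.le)]
        have : (ww : X) = w := rfl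
        rw [this, hnww]
        field_simp
      have hnorm : ‖ww‖ = ‖w‖ := rfl
      have hval : h ww = ∑ i, m i * infDist w ((V i : Set X)) := rfl
      rw [← hval, h2, ← hnorm]
      have h6 := mul_le_mul_of_nonneg_left h1 hnw.le
      calc h u * ‖ww‖ = ‖ww‖ * h u := by ring
        _ ≤ ‖ww‖ * h (‖ww‖⁻¹ • ww) := h6

end Coercive

lemma coercive_of_linear_lb {E : Type*} [NormedAddCommGroup E] [ProperSpace E]
    {f : E → ℝ} {c C : ℝ} (hc : 0 < c) (h : ∀ x, c * ‖x‖ - C ≤ f x) :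
    Tendsto f (cocompact E) atTop := by
  refine tendsto_atTop_mono h ?_
  have h1 : Tendsto (fun x : E => c * ‖x‖) (cocompact E) atTop :=
    (tendsto_const_mul_atTop_of_pos hc).2 tendsto_norm_cocompact_atTop
  have h2 := tendsto_atTop_add_const_right (cocompact E) (-C) h1
  simpa [sub_eq_add_neg] using h2

end Aux

/-- Properties of the set `F` of minimizers of `x ↦ ∑ dist_{γᵢ}(x, Kᵢ)` for non-empty closed
convex sets `Kᵢ`: (a) `F` is closed and convex; (b) if some `Kᵢ` is bounded then `F` is
non-empty and bounded; (c) if all `Kᵢ` are affine flats, then `F` is non-empty and is the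
Minkowski sum of a non-empty closed bounded convex set and a linear subspace. -/
theorem fermatTorricelli_locus_of_sets_closed_convex_bounded_flats
    {X : Type*} [NormedAddCommGroup X] [NormedSpace ℝ X] [FiniteDimensional ℝ X]
    {n : ℕ} (K : Fin n → Set X) (hne : ∀ i, (K i).Nonempty)
    (hcl : ∀ i, IsClosed (K i)) (hcv : ∀ i, Convex ℝ (K i))
    (γ : Fin n → X → ℝ) (hγ : ∀ i, IsGauge (γ i)) :
    (IsClosed {x : X | ∀ y : X, ∑ i, gaugeDist (γ i) x (K i) ≤ ∑ i, gaugeDist (γ i) y (K i)} ∧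
      Convex ℝ {x : X | ∀ y : X, ∑ i, gaugeDist (γ i) x (K i) ≤ ∑ i, gaugeDist (γ i) y (K i)}) ∧
    ((∃ i, Bornology.IsBounded (K i)) →
      ({x : X | ∀ y : X, ∑ i, gaugeDist (γ i) x (K i) ≤
          ∑ i, gaugeDist (γ i) y (K i)}).Nonempty ∧
      Bornology.IsBounded
        {x : X | ∀ y : X, ∑ i, gaugeDist (γ i) x (K i) ≤ ∑ i, gaugeDist (γ i) y (K i)}) ∧
    ((∀ i, ∃ S : AffineSubspace ℝ X, K i = (S : Set X)) →
      ({x : X | ∀ y : X, ∑ i, gaugeDist (γ i) x (K i) ≤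
          ∑ i, gaugeDist (γ i) y (K i)}).Nonempty ∧
      ∃ (C : Set X) (V : Submodule ℝ X), C.Nonempty ∧ IsClosed C ∧
        Bornology.IsBounded C ∧ Convex ℝ C ∧
        {x : X | ∀ y : X, ∑ i, gaugeDist (γ i) x (K i) ≤ ∑ i, gaugeDist (γ i) y (K i)} =
          C + (V : Set X)) := by
  classical
  haveI : ProperSpace X := FiniteDimensional.proper ℝ X
  haveI : Nonempty X := ⟨0⟩
  set f : X → ℝ := fun x => ∑ i, gaugeDist (γ i) x (K i) with hf
  set F : Set X := {x : X | ∀ y : X, f x ≤ f y} with hF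
  -- basic facts about f
  have hfcont : Continuous f :=
    continuous_finset_sum _ fun i _ => gaugeDist_continuous (hγ i) (hne i) (hcv i)
  have hfconv : ∀ x y : X, ∀ a b : ℝ, 0 ≤ a → 0 ≤ b → a + b = 1 →
      f (a • x + b • y) ≤ a * f x + b * f y := by
    intro x y a b ha hb hab
    have hcvi := fun i => ((gaugeDist_convexOn (hγ i) (hne i) (hcv i)).2
      (Set.mem_univ x) (Set.mem_univ y) ha hb hab)
    calc f (a • x + b • y) ≤ ∑ i, (a * gaugeDist (γ i) x (K i) + b * gaugeDist (γ i) y (K i)) :=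
          Finset.sum_le_sum fun i _ => by simpa [smul_eq_mul] using hcvi i
      _ = a * f x + b * f y := by
          rw [hf, Finset.sum_add_distrib, ← Finset.mul_sum, ← Finset.mul_sum]
  -- choose norm lower bounds for the gauges
  choose m hm hmle using fun i => (hγ i).exists_norm_le
  -- part (a)
  have hFclosed : IsClosed F := by
    have he : F = ⋂ y : X, {x : X | f x ≤ f y} := by ext x; simp [hF]
    rw [he]
    exact isClosed_iInter fun y => isClosed_le hfcont continuous_const
  have hFconvex : Convex ℝ F := by
    intro x hx y hy a b ha hb hab
    intro z
    calc f (a • x + b • y) ≤ a * f x + b * f y := hfconv x y a b ha hb hab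
      _ ≤ a * f z + b * f z := by
          have h1 := mul_le_mul_of_nonneg_left (hx z) ha
          have h2 := mul_le_mul_of_nonneg_left (hy z) hb
          linarith
      _ = f z := by rw [← add_mul, hab, one_mul]
  refine ⟨⟨hFclosed, hFconvex⟩, ?_, ?_⟩
  · -- part (b)
    rintro ⟨j, hj⟩
    obtain ⟨R, hR⟩ := hj.subset_closedBall 0
    have hcoer : ∀ x, m j * ‖x‖ - m j * R ≤ f x := by
      intro x
      have h1 : gaugeDist (γ j) x (K j) ≤ f x :=
        Finset.single_le_sum (fun i _ => gaugeDist_nonneg (hγ i) (hne i) x) (Finset.mem_univ j)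
      have h2 : m j * infDist x (K j) ≤ gaugeDist (γ j) x (K j) :=
        le_gaugeDist (hγ j) (hne j) (hm j).le (hmle j) x
      have h3 : ‖x‖ - R ≤ infDist x (K j) := by
        refine le_infDist_of (hne j) fun y hy => ?_
        have hyR : ‖y‖ ≤ R := by
          have := hR hy
          simpa [Metric.mem_closedBall, dist_zero_right] using this
        have h4 : ‖x‖ - ‖y‖ ≤ ‖x - y‖ := norm_sub_norm_le x y
        rw [dist_eq_norm]
        linarith
      have h4 := mul_le_mul_of_nonneg_left h3 (hm j).le
      calc m j * ‖x‖ - m j * R = m j * (‖x‖ - R) := by ring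
        _ ≤ m j * infDist x (K j) := h4
        _ ≤ f x := le_trans h2 h1
    have hten : Tendsto f (cocompact X) atTop :=
      coercive_of_linear_lb (hm j) hcoer
    obtain ⟨x₀, hx₀⟩ := hfcont.exists_forall_le hten
    refine ⟨⟨x₀, hx₀⟩, ?_⟩
    rw [isBounded_iff_forall_norm_le]
    refine ⟨(f 0 + m j * R) / m j, fun x hx => ?_⟩
    have h1 : f x ≤ f 0 := hx 0
    have h2 := hcoer x
    rw [le_div_iff₀ (hm j)]
    nlinarith
  · -- part (c)
    intro hflat
    choose S hS using hflat
    have hSne : ∀ i, ((S i : Set X)).Nonempty := fun i => (hS i) ▸ hne i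
    set V : Submodule ℝ X := ⨅ i, (S i).direction with hV
    obtain ⟨W, hW⟩ := Submodule.exists_isCompl V
    choose a ha using fun i => hne i
    -- lower bound for f in terms of distances to directions
    have key1 : ∀ x : X,
        (∑ i, m i * infDist x (((S i).direction : Set X))) - (∑ i, m i * ‖a i‖) ≤ f x := by
      intro x
      rw [← Finset.sum_sub_distrib]
      refine Finset.sum_le_sum fun i _ => ?_
      have h2 : m i * infDist x (K i) ≤ gaugeDist (γ i) x (K i) :=
        le_gaugeDist (hγ i) (hne i) (hm i).le (hmle i) x
      have h3 : infDist x (((S i).direction : Set X)) - ‖a i‖ ≤ infDist x (K i) := by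
        refine le_infDist_of (hne i) fun y hy => ?_
        have hyS : y ∈ S i := by rw [← AffineSubspace.mem_coe, ← hS i]; exact hy
        have haS : a i ∈ S i := by
          have := ha i; rw [hS i] at this; exact this
        have hdir : y - a i ∈ (S i).direction := by
          have := AffineSubspace.vsub_mem_direction hyS haS
          simpa [vsub_eq_sub] using this
        have h4 : infDist x (((S i).direction : Set X)) ≤ dist x (y - a i) :=
          infDist_le_dist_of_mem hdir
        have h5 : dist x (y - a i) ≤ dist x y + ‖a i‖ := by
          rw [dist_eq_norm, dist_eq_norm]
          have he : x - (y - a i) = (x - y) + a i := by abel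
          rw [he]
          exact norm_add_le _ _
        linarith
      have h6 := mul_le_mul_of_nonneg_left h3 (hm i).le
      nlinarith
    -- coercivity constant on W
    obtain ⟨c, hc, hcb⟩ := exists_coercive (fun i => (S i).direction) m hm W
      (fun w hwW hwV => by
        have hwV' : w ∈ V := by rw [hV]; exact (Submodule.mem_iInf _).2 hwV
        have hbot := hW.inf_eq_bot
        have hmem : w ∈ V ⊓ W := ⟨hwV', hwW⟩
        rw [hbot] at hmem
        simpa using hmem)
    set Cst : ℝ := ∑ i, m i * ‖a i‖ with hCst
    -- translation invariance of f along V
    have hinv : ∀ x : X, ∀ v ∈ V, f (x + v) = f x := by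
      intro x v hv
      rw [hf]
      refine Finset.sum_congr rfl fun i _ => ?_
      have hvi : v ∈ (S i).direction := by
        rw [hV] at hv
        exact (Submodule.mem_iInf _).1 hv i
      have he := gaugeDist_add_of_mem_direction (hγ i) (hSne i) hvi x
      rw [hS i]
      exact he
    -- minimize over W
    set g : ↥W → ℝ := fun w => f w with hg
    have hgcont : Continuous g := hfcont.comp continuous_subtype_val
    have hglb : ∀ w : ↥W, c * ‖w‖ - Cst ≤ g w := by
      intro w
      have h1 := hcb (w : X) w.2
      have h2 := key1 (w : X)
      have h3 : ‖w‖ = ‖(w : X)‖ := rfl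
      rw [h3]
      simp only [hg]
      linarith
    have hgten : Tendsto g (cocompact ↥W) atTop := coercive_of_linear_lb hc hglb
    obtain ⟨w₀, hw₀⟩ := hgcont.exists_forall_le hgten
    -- decomposition of X
    have hdec : ∀ x : X, ∃ v ∈ V, ∃ w ∈ W, v + w = x := by
      intro x
      have hx : x ∈ V ⊔ W := by rw [hW.sup_eq_top]; trivial
      exact Submodule.mem_sup.1 hx
    -- w₀ is a global minimizer
    have hw₀min : ∀ y : X, f (w₀ : X) ≤ f y := by
      intro y
      obtain ⟨v, hv, w, hw, rfl⟩ := hdec y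
      have h1 : f (v + w) = f w := by
        rw [add_comm]; exact hinv w v hv
      rw [h1]
      exact hw₀ ⟨w, hw⟩
    have hw₀F : (w₀ : X) ∈ F := hw₀min
    refine ⟨⟨(w₀ : X), hw₀F⟩, ?_⟩
    refine ⟨F ∩ (W : Set X), V, ⟨(w₀ : X), hw₀F, w₀.2⟩, ?_, ?_, ?_, ?_⟩
    · exact hFclosed.inter W.closed_of_finiteDimensional
    · rw [isBounded_iff_forall_norm_le]
      refine ⟨(f (w₀ : X) + Cst) / c, fun x hx => ?_⟩
      have hxF : x ∈ F := hx.1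
      have h1 : f x ≤ f (w₀ : X) := hxF (w₀ : X)
      have h2 := hcb x hx.2
      have h3 := key1 x
      rw [le_div_iff₀ hc]
      nlinarith
    · exact hFconvex.inter W.convex
    · -- F = (F ∩ W) + V
      ext x
      constructor
      · intro hxF
        obtain ⟨v, hv, w, hw, hvw⟩ := hdec x
        have hfe : f w = f x := by
          rw [← hvw, add_comm v w, hinv w v hv]
        have hwF : w ∈ F := by
          intro y
          rw [hF, Set.mem_setOf_eq] at hxF
          show f w ≤ f y
          rw [hfe]
          exact hxF y
        rw [← hvw]
        have hmm : w + v ∈ (F ∩ (W : Set X)) + (V : Set X) :=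
          Set.add_mem_add ⟨hwF, hw⟩ hv
        rwa [add_comm v w]
      · rintro ⟨p, hp, q, hq, rfl⟩
        intro y
        have he : f (p + q) = f p := hinv p q hq
        show f (p + q) ≤ f y
        rw [he]
        exact hp.1 y
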